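/- Let f ∈ ℚ((z⁻¹)) satisfy f(z) = (A(z) f(z^d) + C(z))/B(z) with A, B, C ∈ ℤ[z], A B ≠ 0, d ≥ 2, and suppose f is not rational. Let [u, v] be a gap in Φ(f) (u, v consecutive degrees of denominators of convergents of f) with v - u > (deg A + deg B)/(d - 1). Then the rational function (A(z) p_u(z^d) + C(z) q_u(z^d)) / (B(z) q_u(z^d)), after cancellation by the gcd of numerator and denominator, is a convergent of f, and the size of the gap associated to this new convergent is strictly greater than v - u. -/

import Mathlib

noncomputable section
open Classical Polynomial

/-- The space ℚ((z⁻¹)) of formal Laurent series over ℚ (variable X = z⁻¹). -/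
abbrev LS := LaurentSeries ℚ

/-- Degree of a formal Laurent series in z (minus the order in X = z⁻¹). -/
def ldeg (f : LS) : ℤ := -f.order


def Dmet (f g : LS) : ℝ := if f = g then 0 else (2 : ℝ) ^ ldeg (f - g)

/-- The element z of ℚ((z⁻¹)): the series X⁻¹ where X = z⁻¹. -/
def Zl : LS := HahnSeries.single (-1 : ℤ) (1 : ℚ)

/-- The polynomial part ⌊f⌋ of a formal Laurent series: the terms with
nonnegative powers of z, i.e. nonpositive exponents of X = z⁻¹. -/
def polyPart (f : LS) : LS :=
  ⟨fun n => if n ≤ 0 then f.coeff n else 0, by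
    refine f.isPWO_support'.mono fun n hn => ?_
    simp only [Function.mem_support] at hn ⊢
    intro h; apply hn; split <;> simp [h]⟩

/-- f is a rational function, i.e. a quotient of two polynomials in ℚ[z]. -/
def IsRatFn (f : LS) : Prop :=
  ∃ P Q : Polynomial ℚ, Q ≠ 0 ∧ f * Polynomial.aeval Zl Q = Polynomial.aeval Zl P

/-- The sequence f₀ = f, f_{n+1} = (fₙ - ⌊fₙ⌋)⁻¹ of the continued fraction
algorithm; the partial quotients are aₙ = ⌊fₙ⌋. -/
def Fseq (f : LS) : ℕ → LS
  | 0 => f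
  | n + 1 => (Fseq f n - polyPart (Fseq f n))⁻¹

/-- Continued fraction numerators: p₀ = a₀, p₁ = a₁a₀ + 1, pₙ = aₙpₙ₋₁ + pₙ₋₂. -/
def cfP (a : ℕ → LS) : ℕ → LS
  | 0 => a 0
  | 1 => a 1 * a 0 + 1
  | n + 2 => a (n + 2) * cfP a (n + 1) + cfP a n

/-- Continued fraction denominators: q₀ = 1, q₁ = a₁, qₙ = aₙqₙ₋₁ + qₙ₋₂. -/
def cfQ (a : ℕ → LS) : ℕ → LS
  | 0 => 1
  | 1 => a 1
  | n + 2 => a (n + 2) * cfQ a (n + 1) + cfQ a n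


/-- The partial quotients of the continued fraction algorithm applied to f. -/
def cfa (f : LS) (n : ℕ) : LS := polyPart (Fseq f n)

/-- Substitution z ↦ z^d on formal Laurent series: (powSub d f)(z) = f(z^d). -/
def powSub (d : ℕ) (f : LS) : LS :=
  if hd : 0 < d then
    HahnSeries.embDomain
      (OrderEmbedding.ofStrictMono (fun n : ℤ => (d : ℤ) * n)
        (fun a b h => mul_lt_mul_of_pos_left h (by exact_mod_cast hd))) f
  else f

/-- The Mahler functional equation B(z) f(z) = A(z) f(z^d) + C(z). -/
def MahlerEq (A B C : Polynomial ℤ) (d : ℕ) (f : LS) : Prop :=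
  Polynomial.aeval Zl B * f = Polynomial.aeval Zl A * powSub d f + Polynomial.aeval Zl C

/-- Φ(f): the set of degrees of denominators of the convergents of f. -/
def Phi (f : LS) : Set ℤ := {m : ℤ | ∃ n : ℕ, ldeg (cfQ (cfa f) n) = m}

/-- [u, v] is a gap in Φ(f): u, v are consecutive elements of Φ(f). -/
def IsGap (f : LS) (u v : ℤ) : Prop :=
  u ∈ Phi f ∧ v ∈ Phi f ∧ u < v ∧ ∀ w : ℤ, u < w → w < v → w ∉ Phi f

/-- (p, q) is the convergent of f whose denominator has degree u. -/
def IsConvAt (f : LS) (u : ℤ) (p q : LS) : Prop :=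
  ∃ n : ℕ, cfP (cfa f) n = p ∧ cfQ (cfa f) n = q ∧ ldeg q = u

/-- The fraction (A(z) p(z^d) + C(z) q(z^d)) / (B(z) q(z^d)). -/
def succFrac (A B C : Polynomial ℤ) (d : ℕ) (p q : LS) : LS :=
  (Polynomial.aeval Zl A * powSub d p + Polynomial.aeval Zl C * powSub d q) /
    (Polynomial.aeval Zl B * powSub d q)

/-- [u, v] is a big gap: a gap of size exceeding (deg A + deg B)/(d-1). -/
def BigGap (A B : Polynomial ℤ) (d : ℕ) (f : LS) (u v : ℤ) : Prop :=
  IsGap f u v ∧ ((A.natDegree + B.natDegree : ℝ)) / ((d : ℝ) - 1) < (v : ℝ) - (u : ℝ)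

/-- [u', v'] is the direct successor of the gap [u, v]: the gap whose convergent
is (A p_u(z^d) + C q_u(z^d))/(B q_u(z^d)) (after cancellation). -/
def DirectSucc (A B C : Polynomial ℤ) (d : ℕ) (f : LS) (u v u' v' : ℤ) : Prop :=
  IsGap f u v ∧ IsGap f u' v' ∧
    ∃ p q p' q' : LS, IsConvAt f u p q ∧ IsConvAt f u' p' q' ∧
      p' / q' = succFrac A B C d p q

/-- A primitive gap: a big gap that is not the direct successor of any big gap. -/
def PrimitiveGap (A B C : Polynomial ℤ) (d : ℕ) (f : LS) (u v : ℤ) : Prop :=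
  BigGap A B d f u v ∧
    ¬ ∃ u' v' : ℤ, BigGap A B d f u' v' ∧ DirectSucc A B C d f u' v' u v
namespace MahlerAux

lemma ldeg_zero : ldeg (0 : LS) = 0 := by simp [ldeg, HahnSeries.order_zero]

lemma ldeg_one : ldeg (1 : LS) = 0 := by simp [ldeg, HahnSeries.order_one]

lemma ldeg_neg (x : LS) : ldeg (-x) = ldeg x := by simp [ldeg, HahnSeries.order_neg]

lemma ldeg_mul {x y : LS} (hx : x ≠ 0) (hy : y ≠ 0) :
    ldeg (x * y) = ldeg x + ldeg y := by
  simp [ldeg, HahnSeries.order_mul hx hy]; ring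

lemma ldeg_inv {x : LS} (hx : x ≠ 0) : ldeg x⁻¹ = -ldeg x := by
  have h1 : x * x⁻¹ = 1 := mul_inv_cancel₀ hx
  have h2 : x⁻¹ ≠ 0 := inv_ne_zero hx
  have := ldeg_mul hx h2
  rw [h1, ldeg_one] at this
  linarith

lemma order_eq_of_coeff {x : LS} {m : ℤ} (h1 : x.coeff m ≠ 0)
    (h2 : ∀ n < m, x.coeff n = 0) : x.order = m := by
  have hx : x ≠ 0 := HahnSeries.ne_zero_of_coeff_ne_zero h1
  have h3 := HahnSeries.order_le_of_coeff_ne_zero h1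
  rcases lt_or_eq_of_le h3 with h | h
  · exact absurd (h2 _ h) ((HahnSeries.coeff_order_eq_zero.not.2 hx))
  · exact h

lemma add_dominant {x y : LS} (hx : x ≠ 0) (h : y = 0 ∨ (y ≠ 0 ∧ ldeg y < ldeg x)) :
    x + y ≠ 0 ∧ ldeg (x + y) = ldeg x := by
  rcases h with rfl | ⟨hy, hlt⟩
  · simp [hx]
  · have horder : x.order < y.order := by simp [ldeg] at hlt; linarith
    have hco : (x + y).coeff x.order = x.coeff x.order := by
      rw [HahnSeries.coeff_add, HahnSeries.coeff_eq_zero_of_lt_order horder, add_zero]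
    have hcone : (x + y).coeff x.order ≠ 0 := by
      rw [hco]; exact (HahnSeries.coeff_order_eq_zero.not.2 hx)
    have hord : (x + y).order = x.order := by
      apply order_eq_of_coeff hcone
      intro n hn
      rw [HahnSeries.coeff_add, HahnSeries.coeff_eq_zero_of_lt_order hn,
        HahnSeries.coeff_eq_zero_of_lt_order (hn.trans horder), add_zero]
    exact ⟨HahnSeries.ne_zero_of_coeff_ne_zero hcone, by simp [ldeg, hord]⟩

lemma ldeg_add_max {x y : LS} (hx : x ≠ 0) (hy : y ≠ 0) (hne : ldeg x ≠ ldeg y) :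
    x + y ≠ 0 ∧ ldeg (x + y) = max (ldeg x) (ldeg y) := by
  rcases lt_or_gt_of_ne hne with h | h
  · have := add_dominant hy (Or.inr ⟨hx, h⟩)
    rw [add_comm] at this
    exact ⟨this.1, by rw [this.2, max_eq_right h.le]⟩
  · have := add_dominant hx (Or.inr ⟨hy, h⟩)
    exact ⟨this.1, by rw [this.2, max_eq_left h.le]⟩

lemma Zl_pow (k : ℕ) : Zl ^ k = HahnSeries.single (-(k : ℤ)) (1 : ℚ) := by
  rw [Zl, HahnSeries.single_pow]
  simp

lemma aeval_Zl_monomial (k : ℕ) (c : ℚ) :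
    Polynomial.aeval Zl (Polynomial.monomial k c) = HahnSeries.single (-(k : ℤ)) c := by
  have halg : (algebraMap ℚ LS) c = HahnSeries.single (0 : ℤ) c := by
    have h1 := eq_ratCast (algebraMap ℚ LS) c
    have h2 := eq_ratCast ((HahnSeries.C (Γ := ℤ)).comp (algebraMap ℚ ℚ)) c
    have h3 : (HahnSeries.C.comp (algebraMap ℚ ℚ)) c = HahnSeries.single (0:ℤ) c := by
      rw [RingHom.comp_apply, Algebra.algebraMap_self_apply, HahnSeries.C_apply]
    exact h1.trans (h2.symm.trans h3)
  rw [Polynomial.aeval_monomial, Zl_pow, halg, HahnSeries.single_mul_single]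
  simp

lemma coeff_aeval_Zl (P : Polynomial ℚ) (n : ℤ) :
    (Polynomial.aeval Zl P).coeff n = if n ≤ 0 then P.coeff (-n).toNat else 0 := by
  induction P using Polynomial.induction_on' with
  | add p q hp hq =>
    rw [map_add, HahnSeries.coeff_add, hp, hq, Polynomial.coeff_add]
    split <;> simp
  | monomial k c =>
    rw [aeval_Zl_monomial, HahnSeries.coeff_single]
    by_cases h1 : n = -(k : ℤ)
    · rw [if_pos h1, if_pos (by omega), Polynomial.coeff_monomial, if_pos (by omega)]
    · rw [if_neg h1]
      by_cases h2 : n ≤ 0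
      · rw [if_pos h2, Polynomial.coeff_monomial, if_neg (by omega)]
      · rw [if_neg h2]

lemma aeval_Zl_ne_zero {P : Polynomial ℚ} (hP : P ≠ 0) : Polynomial.aeval Zl P ≠ 0 := by
  intro h
  apply hP
  ext k
  have := coeff_aeval_Zl P (-(k : ℤ))
  rw [h] at this
  simp at this
  simpa using this.symm

lemma ldeg_aeval_Zl {P : Polynomial ℚ} (hP : P ≠ 0) :
    ldeg (Polynomial.aeval Zl P) = P.natDegree := by
  have hord : (Polynomial.aeval Zl P).order = -(P.natDegree : ℤ) := by
    apply order_eq_of_coeff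
    · rw [coeff_aeval_Zl]
      simp only [neg_neg, Int.toNat_natCast]
      rw [if_pos (by omega)]
      exact fun h => hP (Polynomial.leadingCoeff_eq_zero.mp h)
    · intro n hn
      rw [coeff_aeval_Zl, if_pos (by omega)]
      apply Polynomial.coeff_eq_zero_of_natDegree_lt
      omega
  simp [ldeg, hord]


/-- g is (the image of) a polynomial in z. -/
def PolyE (g : LS) : Prop := ∃ P : Polynomial ℚ, Polynomial.aeval Zl P = g

lemma PolyE.zero : PolyE 0 := ⟨0, by simp⟩
lemma PolyE.one : PolyE 1 := ⟨1, by simp⟩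
lemma PolyE.add {x y : LS} (hx : PolyE x) (hy : PolyE y) : PolyE (x + y) := by
  obtain ⟨P, hP⟩ := hx; obtain ⟨Q, hQ⟩ := hy
  exact ⟨P + Q, by rw [map_add, hP, hQ]⟩
lemma PolyE.mul {x y : LS} (hx : PolyE x) (hy : PolyE y) : PolyE (x * y) := by
  obtain ⟨P, hP⟩ := hx; obtain ⟨Q, hQ⟩ := hy
  exact ⟨P * Q, by rw [map_mul, hP, hQ]⟩
lemma PolyE.neg {x : LS} (hx : PolyE x) : PolyE (-x) := by
  obtain ⟨P, hP⟩ := hx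
  exact ⟨-P, by rw [map_neg, hP]⟩
lemma PolyE.sub {x y : LS} (hx : PolyE x) (hy : PolyE y) : PolyE (x - y) := by
  rw [sub_eq_add_neg]; exact hx.add hy.neg
lemma PolyE.pow {x : LS} (hx : PolyE x) (k : ℕ) : PolyE (x ^ k) := by
  induction k with
  | zero => simpa using PolyE.one
  | succ n ih => rw [pow_succ]; exact ih.mul hx

lemma PolyE.ldeg_nonneg {x : LS} (hx : PolyE x) (h0 : x ≠ 0) : 0 ≤ ldeg x := by
  obtain ⟨P, hP⟩ := hx
  have hP0 : P ≠ 0 := by rintro rfl; simp at hP; exact h0 hP.symm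
  rw [← hP, ldeg_aeval_Zl hP0]
  positivity

lemma aeval_Zl_int_monomial (k : ℕ) (c : ℤ) :
    Polynomial.aeval Zl (Polynomial.monomial k c) = HahnSeries.single (-(k : ℤ)) (c : ℚ) := by
  have halg : (algebraMap ℤ LS) c = HahnSeries.single (0 : ℤ) (c : ℚ) := by
    have h1 := eq_intCast (algebraMap ℤ LS) c
    have h2 := eq_intCast ((HahnSeries.C (Γ := ℤ)).comp (Int.castRingHom ℚ)) c
    have h3 : (HahnSeries.C.comp (Int.castRingHom ℚ)) c = HahnSeries.single (0:ℤ) (c : ℚ) := by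
      rw [RingHom.comp_apply, HahnSeries.C_apply]
      norm_num
    exact h1.trans (h2.symm.trans h3)
  rw [Polynomial.aeval_monomial, Zl_pow, halg, HahnSeries.single_mul_single]
  simp

lemma coeff_aeval_Zl_int (A : Polynomial ℤ) (n : ℤ) :
    (Polynomial.aeval Zl A).coeff n = if n ≤ 0 then ((A.coeff (-n).toNat : ℤ) : ℚ) else 0 := by
  induction A using Polynomial.induction_on' with
  | add p q hp hq =>
    rw [map_add, HahnSeries.coeff_add, hp, hq, Polynomial.coeff_add]
    split <;> simp
  | monomial k c =>
    rw [aeval_Zl_int_monomial, HahnSeries.coeff_single]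
    by_cases h1 : n = -(k : ℤ)
    · rw [if_pos h1, if_pos (by omega), Polynomial.coeff_monomial, if_pos (by omega)]
    · rw [if_neg h1]
      by_cases h2 : n ≤ 0
      · rw [if_pos h2, Polynomial.coeff_monomial, if_neg (by omega), Int.cast_zero]
      · rw [if_neg h2]

lemma aeval_Zl_int_eq_map (A : Polynomial ℤ) :
    Polynomial.aeval Zl A = Polynomial.aeval Zl (A.map (algebraMap ℤ ℚ)) := by
  ext n
  rw [coeff_aeval_Zl_int, coeff_aeval_Zl]
  split <;> simp [Polynomial.coeff_map]

lemma PolyE.int (A : Polynomial ℤ) : PolyE (Polynomial.aeval Zl A) :=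
  ⟨A.map (algebraMap ℤ ℚ), (aeval_Zl_int_eq_map A).symm⟩

lemma map_int_ne_zero {A : Polynomial ℤ} (hA : A ≠ 0) : A.map (algebraMap ℤ ℚ) ≠ 0 := by
  simpa using (Polynomial.map_ne_zero_iff
    (RingHom.injective_int (algebraMap ℤ ℚ))).mpr hA

lemma aeval_Zl_int_ne_zero {A : Polynomial ℤ} (hA : A ≠ 0) : Polynomial.aeval Zl A ≠ 0 := by
  rw [aeval_Zl_int_eq_map]
  exact aeval_Zl_ne_zero (map_int_ne_zero hA)

lemma ldeg_aeval_Zl_int {A : Polynomial ℤ} (hA : A ≠ 0) :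
    ldeg (Polynomial.aeval Zl A) = A.natDegree := by
  rw [aeval_Zl_int_eq_map, ldeg_aeval_Zl (map_int_ne_zero hA),
    Polynomial.natDegree_map_eq_of_injective (RingHom.injective_int (algebraMap ℤ ℚ))]

lemma polyPart_coeff (g : LS) (n : ℤ) :
    (polyPart g).coeff n = if n ≤ 0 then g.coeff n else 0 := rfl

lemma polyPart_polyE (g : LS) : PolyE (polyPart g) := by
  by_cases hg : g = 0
  · have : polyPart g = 0 := by
      ext n; rw [polyPart_coeff, hg]; simp
    rw [this]; exact PolyE.zero
  · set N : ℕ := (-g.order).toNat with hN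
    refine ⟨∑ k ∈ Finset.range (N + 1), Polynomial.C (g.coeff (-(k : ℤ))) * Polynomial.X ^ k, ?_⟩
    ext n
    rw [coeff_aeval_Zl, polyPart_coeff]
    have hc : ∀ m : ℕ, (∑ k ∈ Finset.range (N + 1),
        Polynomial.C (g.coeff (-(k : ℤ))) * Polynomial.X ^ k).coeff m
        = if m ≤ N then g.coeff (-(m : ℤ)) else 0 := by
      intro m
      rw [Polynomial.finset_sum_coeff]
      by_cases hm : m ≤ N
      · rw [Finset.sum_eq_single m]
        · simp [Polynomial.coeff_C_mul, Polynomial.coeff_X_pow, hm]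
        · intro b _ hb
          simp [Polynomial.coeff_C_mul, Polynomial.coeff_X_pow, Ne.symm hb]
        · intro h; exact absurd (Finset.mem_range.mpr (by omega)) h
      · rw [if_neg hm]
        apply Finset.sum_eq_zero
        intro k hk
        simp only [Finset.mem_range] at hk
        rw [Polynomial.coeff_C_mul, Polynomial.coeff_X_pow, if_neg (by omega : ¬ m = k), mul_zero]
    by_cases hn : n ≤ 0
    · rw [if_pos hn, if_pos hn, hc]
      by_cases h2 : (-n).toNat ≤ N
      · rw [if_pos h2]
        congr 1
        omega
      · rw [if_neg h2]
        have : n < g.order := by omega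
        exact (HahnSeries.coeff_eq_zero_of_lt_order this).symm
    · rw [if_neg hn, if_neg hn]

lemma isRatFn_iff {x : LS} : IsRatFn x ↔
    ∃ P Q : Polynomial ℚ, Q ≠ 0 ∧ x = Polynomial.aeval Zl P / Polynomial.aeval Zl Q := by
  constructor
  · rintro ⟨P, Q, hQ, hx⟩
    refine ⟨P, Q, hQ, ?_⟩
    rw [← hx, mul_div_assoc, div_self (aeval_Zl_ne_zero hQ), mul_one]
  · rintro ⟨P, Q, hQ, hx⟩
    refine ⟨P, Q, hQ, ?_⟩
    rw [hx, div_mul_cancel₀ _ (aeval_Zl_ne_zero hQ)]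

lemma ratfn_of_polyE {x : LS} (hx : PolyE x) : IsRatFn x := by
  obtain ⟨P, hP⟩ := hx
  exact ⟨P, 1, one_ne_zero, by simp [hP]⟩

lemma ratfn_add {x y : LS} (hx : IsRatFn x) (hy : IsRatFn y) : IsRatFn (x + y) := by
  rw [isRatFn_iff] at hx hy ⊢
  obtain ⟨P, Q, hQ, hx⟩ := hx; obtain ⟨P', Q', hQ', hy⟩ := hy
  refine ⟨P * Q' + P' * Q, Q * Q', mul_ne_zero hQ hQ', ?_⟩
  rw [hx, hy, map_add, map_mul, map_mul, map_mul]
  field_simp [aeval_Zl_ne_zero hQ, aeval_Zl_ne_zero hQ']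

lemma ratfn_inv {x : LS} (hx : IsRatFn x) : IsRatFn x⁻¹ := by
  by_cases h0 : x = 0
  · rw [h0, inv_zero]; exact ratfn_of_polyE PolyE.zero
  rw [isRatFn_iff] at hx ⊢
  obtain ⟨P, Q, hQ, hx⟩ := hx
  have hP : P ≠ 0 := by
    rintro rfl
    rw [hx] at h0; simp at h0
  exact ⟨Q, P, hP, by rw [hx, inv_div]⟩


lemma frac_coeff (g : LS) {n : ℤ} (hn : n ≤ 0) : (g - polyPart g).coeff n = 0 := by
  rw [HahnSeries.coeff_sub, polyPart_coeff, if_pos hn, sub_self]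

lemma frac_order {g : LS} (h : g - polyPart g ≠ 0) : 1 ≤ (g - polyPart g).order := by
  by_contra hlt
  push_neg at hlt
  exact (HahnSeries.coeff_order_eq_zero.not.2 h) (frac_coeff g (by omega))

lemma order_polyPart {g : LS} (h : g.order ≤ 0) (hg : g ≠ 0) :
    polyPart g ≠ 0 ∧ (polyPart g).order = g.order := by
  have hco : (polyPart g).coeff g.order ≠ 0 := by
    rw [polyPart_coeff, if_pos h]; exact (HahnSeries.coeff_order_eq_zero.not.2 hg)
  refine ⟨HahnSeries.ne_zero_of_coeff_ne_zero hco, order_eq_of_coeff hco ?_⟩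
  intro n hn
  rw [polyPart_coeff]
  split
  · exact HahnSeries.coeff_eq_zero_of_lt_order hn
  · rfl

lemma irr_step {g : LS} (hg : ¬ IsRatFn g) : g - polyPart g ≠ 0 := by
  intro h
  rw [sub_eq_zero] at h
  exact hg (h ▸ ratfn_of_polyE (polyPart_polyE g))

lemma Fseq_irr {f : LS} (hf : ¬ IsRatFn f) : ∀ n, ¬ IsRatFn (Fseq f n) := by
  intro n
  induction n with
  | zero => exact hf
  | succ n ih =>
    intro hrat
    have hfr : Fseq f n - polyPart (Fseq f n) ≠ 0 := irr_step ih
    apply ih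
    have heq : Fseq f n = polyPart (Fseq f n) + (Fseq f (n+1))⁻¹ := by
      rw [show Fseq f (n+1) = (Fseq f n - polyPart (Fseq f n))⁻¹ from rfl, inv_inv]
      ring
    rw [heq]
    exact ratfn_add (ratfn_of_polyE (polyPart_polyE _)) (ratfn_inv hrat)

lemma Fseq_frac_ne {f : LS} (hf : ¬ IsRatFn f) (n : ℕ) :
    Fseq f n - polyPart (Fseq f n) ≠ 0 := irr_step (Fseq_irr hf n)

lemma Fseq_succ_ne {f : LS} (hf : ¬ IsRatFn f) (n : ℕ) : Fseq f (n+1) ≠ 0 :=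
  inv_ne_zero (Fseq_frac_ne hf n)

lemma Fseq_succ_ldeg {f : LS} (hf : ¬ IsRatFn f) (n : ℕ) : 1 ≤ ldeg (Fseq f (n+1)) := by
  have h1 := frac_order (Fseq_frac_ne hf n)
  have h2 : ldeg (Fseq f (n+1)) = - ldeg (Fseq f n - polyPart (Fseq f n)) :=
    ldeg_inv (Fseq_frac_ne hf n)
  rw [h2]
  simp only [ldeg]
  omega

lemma cfa_ne {f : LS} (hf : ¬ IsRatFn f) (n : ℕ) : cfa f (n+1) ≠ 0 := by
  have h1 := Fseq_succ_ldeg hf n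
  exact (order_polyPart (by simp only [ldeg] at h1; omega) (Fseq_succ_ne hf n)).1

lemma cfa_ldeg_eq {f : LS} (hf : ¬ IsRatFn f) (n : ℕ) :
    ldeg (cfa f (n+1)) = ldeg (Fseq f (n+1)) := by
  have h1 := Fseq_succ_ldeg hf n
  have := (order_polyPart (g := Fseq f (n+1)) (by simp only [ldeg] at h1; omega)
    (Fseq_succ_ne hf n)).2
  simp only [ldeg, cfa, this]

lemma cfa_ldeg {f : LS} (hf : ¬ IsRatFn f) (n : ℕ) : 1 ≤ ldeg (cfa f (n+1)) := by
  rw [cfa_ldeg_eq hf n]; exact Fseq_succ_ldeg hf n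

lemma Fseq_rec {f : LS} (hf : ¬ IsRatFn f) (n : ℕ) :
    Fseq f n = cfa f n + (Fseq f (n+1))⁻¹ := by
  rw [show Fseq f (n+1) = (Fseq f n - polyPart (Fseq f n))⁻¹ from rfl, inv_inv]
  show Fseq f n = polyPart (Fseq f n) + _
  ring

lemma cfQ_facts {f : LS} (hf : ¬ IsRatFn f) : ∀ n : ℕ,
    cfQ (cfa f) n ≠ 0 ∧ cfQ (cfa f) (n+1) ≠ 0 ∧
    ldeg (cfQ (cfa f) (n+1)) = ldeg (cfa f (n+1)) + ldeg (cfQ (cfa f) n) ∧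
    ldeg (cfQ (cfa f) n) < ldeg (cfQ (cfa f) (n+1)) := by
  intro n
  induction n with
  | zero =>
    have h1 : cfQ (cfa f) 0 = 1 := rfl
    have h2 : cfQ (cfa f) 1 = cfa f 1 := rfl
    refine ⟨by rw [h1]; exact one_ne_zero, by rw [h2]; exact cfa_ne hf 0, ?_, ?_⟩
    · rw [h1, h2, ldeg_one, add_zero]
    · rw [h1, h2, ldeg_one]
      have h3 : (1:ℤ) ≤ ldeg (cfa f 1) := cfa_ldeg hf 0
      omega
  | succ n ih =>
    obtain ⟨h0, h1, heq, hlt⟩ := ih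
    have hrec : cfQ (cfa f) (n+2) = cfa f (n+2) * cfQ (cfa f) (n+1) + cfQ (cfa f) n := rfl
    have hx : cfa f (n+2) * cfQ (cfa f) (n+1) ≠ 0 := mul_ne_zero (cfa_ne hf (n+1)) h1
    have hxl : ldeg (cfa f (n+2) * cfQ (cfa f) (n+1))
        = ldeg (cfa f (n+2)) + ldeg (cfQ (cfa f) (n+1)) := ldeg_mul (cfa_ne hf (n+1)) h1
    have ha : (1:ℤ) ≤ ldeg (cfa f (n+2)) := cfa_ldeg hf (n+1)
    have hd := add_dominant hx (Or.inr ⟨h0, by rw [hxl]; omega⟩)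
    refine ⟨h1, by rw [hrec]; exact hd.1, ?_, ?_⟩
    · rw [hrec, hd.2, hxl]
    · rw [hrec, hd.2, hxl]; omega

lemma cfQ_ne {f : LS} (hf : ¬ IsRatFn f) (n : ℕ) : cfQ (cfa f) n ≠ 0 := (cfQ_facts hf n).1

lemma cfQ_ldeg_succ {f : LS} (hf : ¬ IsRatFn f) (n : ℕ) :
    ldeg (cfQ (cfa f) (n+1)) = ldeg (cfa f (n+1)) + ldeg (cfQ (cfa f) n) :=
  (cfQ_facts hf n).2.2.1

lemma cfQ_mono {f : LS} (hf : ¬ IsRatFn f) :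
    StrictMono (fun n : ℕ => ldeg (cfQ (cfa f) n)) :=
  strictMono_nat_of_lt_succ (fun n => (cfQ_facts hf n).2.2.2)

lemma cfQ_ldeg_zero (f : LS) : ldeg (cfQ (cfa f) 0) = 0 := ldeg_one

lemma cfQ_ldeg_nonneg {f : LS} (hf : ¬ IsRatFn f) (n : ℕ) : 0 ≤ ldeg (cfQ (cfa f) n) := by
  have := (cfQ_mono hf).monotone (Nat.zero_le n)
  simpa [cfQ_ldeg_zero] using this

lemma cfQ_ldeg_ge {f : LS} (hf : ¬ IsRatFn f) (n : ℕ) : (n : ℤ) ≤ ldeg (cfQ (cfa f) n) := by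
  induction n with
  | zero => simp [cfQ_ldeg_zero]
  | succ n ih =>
    have := cfQ_ldeg_succ hf n
    have := cfa_ldeg hf n
    push_cast
    omega


/-- Shifted continued fraction numerators: ps (n+1) = cfP (cfa f) n, ps 0 = 1. -/
def ps (f : LS) : ℕ → LS
  | 0 => 1
  | 1 => cfa f 0
  | n + 2 => cfa f (n + 1) * ps f (n + 1) + ps f n

/-- Shifted continued fraction denominators: qs (n+1) = cfQ (cfa f) n, qs 0 = 0. -/
def qs (f : LS) : ℕ → LS
  | 0 => 0
  | 1 => 1
  | n + 2 => cfa f (n + 1) * qs f (n + 1) + qs f n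

lemma ps_succ (f : LS) : ∀ n, ps f (n + 1) = cfP (cfa f) n
  | 0 => rfl
  | 1 => by
    show cfa f 1 * ps f 1 + ps f 0 = cfa f 1 * cfa f 0 + 1
    rfl
  | (n+2) => by
    show cfa f (n+2) * ps f (n+2) + ps f (n+1) = _
    rw [ps_succ f (n+1), ps_succ f n]
    rfl

lemma qs_succ (f : LS) : ∀ n, qs f (n + 1) = cfQ (cfa f) n
  | 0 => rfl
  | 1 => by
    show cfa f 1 * qs f 1 + qs f 0 = cfa f 1
    show cfa f 1 * 1 + 0 = cfa f 1
    ring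
  | (n+2) => by
    show cfa f (n+2) * qs f (n+2) + qs f (n+1) = _
    rw [qs_succ f (n+1), qs_succ f n]
    rfl

lemma cf_key {f : LS} (hf : ¬ IsRatFn f) : ∀ m : ℕ,
    f * (Fseq f (m+1) * qs f (m+1) + qs f m) = Fseq f (m+1) * ps f (m+1) + ps f m := by
  intro m
  induction m with
  | zero =>
    show f * (Fseq f 1 * 1 + 0) = Fseq f 1 * cfa f 0 + 1
    have h1 : Fseq f 1 = (f - polyPart f)⁻¹ := rfl
    have h2 : f - polyPart f ≠ 0 := Fseq_frac_ne hf 0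
    have h3 : cfa f 0 = polyPart f := rfl
    have h4 : (f - polyPart f) * (f - polyPart f)⁻¹ = 1 := mul_inv_cancel₀ h2
    rw [h1, h3]
    linear_combination h4
  | succ m ih =>
    have hR : Fseq f (m+1) = cfa f (m+1) + (Fseq f (m+2))⁻¹ := Fseq_rec hf (m+1)
    have h2 : Fseq f (m+2) ≠ 0 := Fseq_succ_ne hf (m+1)
    have e1 : Fseq f (m+2) * Fseq f (m+1) = Fseq f (m+2) * cfa f (m+1) + 1 := by
      rw [hR]
      field_simp
    have hqs : qs f (m+2) = cfa f (m+1) * qs f (m+1) + qs f m := rfl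
    have hps : ps f (m+2) = cfa f (m+1) * ps f (m+1) + ps f m := rfl
    rw [hqs, hps]
    linear_combination (Fseq f (m+2)) * ih - (f * qs f (m+1) - ps f (m+1)) * e1

lemma cf_det (f : LS) : ∀ m : ℕ,
    ps f (m+1) * qs f m - ps f m * qs f (m+1) = (-1 : LS) ^ (m+1)
  | 0 => by
    show cfa f 0 * 0 - 1 * 1 = (-1 : LS) ^ 1
    ring
  | (m+1) => by
    have hqs : qs f (m+2) = cfa f (m+1) * qs f (m+1) + qs f m := rfl
    have hps : ps f (m+2) = cfa f (m+1) * ps f (m+1) + ps f m := rfl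
    have ih := cf_det f m
    rw [hqs, hps, pow_succ]
    linear_combination (-1 : LS) * ih

lemma cf_err {f : LS} (hf : ¬ IsRatFn f) : ∀ m : ℕ,
    f * qs f m - ps f m ≠ 0 ∧ ldeg (f * qs f m - ps f m) = - ldeg (qs f (m+1)) := by
  intro m
  induction m with
  | zero =>
    constructor
    · show f * 0 - 1 ≠ 0
      intro h
      have : (1 : LS) = 0 := by linear_combination -h
      simp at this
    · show ldeg (f * 0 - 1) = - ldeg (qs f 1)
      have h1 : f * 0 - 1 = -(1 : LS) := by ring
      have h2 : qs f 1 = 1 := rfl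
      rw [h1, h2, ldeg_neg, ldeg_one]
      ring
  | succ m ih =>
    have hkey := cf_key hf m
    have hrel : Fseq f (m+1) * (f * qs f (m+1) - ps f (m+1)) = -(f * qs f m - ps f m) := by
      linear_combination hkey
    have hF : Fseq f (m+1) ≠ 0 := Fseq_succ_ne hf m
    have hne : f * qs f (m+1) - ps f (m+1) ≠ 0 := by
      intro h
      rw [h, mul_zero] at hrel
      exact ih.1 (by linear_combination hrel)
    have hld : ldeg (Fseq f (m+1)) + ldeg (f * qs f (m+1) - ps f (m+1))
        = ldeg (f * qs f m - ps f m) := by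
      rw [← ldeg_mul hF hne, hrel, ldeg_neg]
    have hF2 : ldeg (Fseq f (m+1)) = ldeg (cfa f (m+1)) := (cfa_ldeg_eq hf m).symm
    have hq2 : ldeg (qs f (m+1+1)) = ldeg (cfa f (m+1)) + ldeg (qs f (m+1)) := by
      rw [qs_succ f (m+1), qs_succ f m]
      exact cfQ_ldeg_succ hf m
    refine ⟨hne, ?_⟩
    rw [ih.2] at hld
    omega

lemma cfPQ_polyE (f : LS) : ∀ n : ℕ, PolyE (ps f n) ∧ PolyE (qs f n)
  | 0 => ⟨PolyE.one, PolyE.zero⟩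
  | 1 => ⟨polyPart_polyE _, PolyE.one⟩
  | (n+2) => by
    have h1 := cfPQ_polyE f (n+1)
    have h0 := cfPQ_polyE f n
    have ha : PolyE (cfa f (n+1)) := polyPart_polyE _
    exact ⟨(ha.mul h1.1).add h0.1, (ha.mul h1.2).add h0.2⟩

lemma cfP_polyE (f : LS) (n : ℕ) : PolyE (cfP (cfa f) n) := by
  rw [← ps_succ]; exact (cfPQ_polyE f (n+1)).1

lemma cfQ_polyE (f : LS) (n : ℕ) : PolyE (cfQ (cfa f) n) := by
  rw [← qs_succ]; exact (cfPQ_polyE f (n+1)).2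

lemma conv_err {f : LS} (hf : ¬ IsRatFn f) (n : ℕ) :
    f * cfQ (cfa f) n - cfP (cfa f) n ≠ 0 ∧
    ldeg (f * cfQ (cfa f) n - cfP (cfa f) n) = - ldeg (cfQ (cfa f) (n+1)) := by
  have := cf_err hf (n+1)
  rwa [qs_succ f (n+1), qs_succ f n, ps_succ f n] at this

lemma conv_det {f : LS} (n : ℕ) :
    cfP (cfa f) (n+1) * cfQ (cfa f) n - cfP (cfa f) n * cfQ (cfa f) (n+1)
      = (-1 : LS) ^ n := by
  have := cf_det f (n+1)
  rw [qs_succ f (n+1), qs_succ f n, ps_succ f n, ps_succ f (n+1)] at this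
  rw [this]
  rw [pow_succ, pow_succ]
  ring_nf


lemma powSub_emb (d : ℕ) (hd : 0 < d) (x : LS) :
    powSub d x = HahnSeries.embDomain
      (OrderEmbedding.ofStrictMono (fun n : ℤ => (d : ℤ) * n)
        (fun a b h => mul_lt_mul_of_pos_left h (by exact_mod_cast hd))) x := by
  rw [powSub, dif_pos hd]

lemma powSub_single (d : ℕ) (hd : 0 < d) (a : ℤ) (c : ℚ) :
    powSub d (HahnSeries.single a c) = HahnSeries.single ((d : ℤ) * a) c := by
  rw [powSub_emb d hd]
  exact HahnSeries.embDomain_single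

lemma powSub_coeff (d : ℕ) (hd : 0 < d) (x : LS) (n : ℤ) :
    (powSub d x).coeff ((d : ℤ) * n) = x.coeff n := by
  rw [powSub_emb d hd]
  exact HahnSeries.embDomain_coeff

lemma powSub_coeff_notin (d : ℕ) (hd : 0 < d) (x : LS) {n : ℤ}
    (h : ¬ ∃ a : ℤ, (d : ℤ) * a = n) : (powSub d x).coeff n = 0 := by
  rw [powSub_emb d hd]
  apply HahnSeries.embDomain_notin_range
  rintro ⟨a, ha⟩
  exact h ⟨a, ha⟩

lemma powSub_add (d : ℕ) (hd : 0 < d) (x y : LS) :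
    powSub d (x + y) = powSub d x + powSub d y := by
  simp only [powSub_emb d hd]
  exact HahnSeries.embDomain_add _ x y

lemma powSub_mul (d : ℕ) (hd : 0 < d) (x y : LS) :
    powSub d (x * y) = powSub d x * powSub d y := by
  simp only [powSub_emb d hd]
  exact HahnSeries.embDomain_mul _ (fun a b => mul_add (d : ℤ) a b) x y

lemma powSub_neg (d : ℕ) (hd : 0 < d) (x : LS) : powSub d (-x) = - powSub d x := by
  have := powSub_add d hd x (-x)
  simp only [add_neg_cancel] at this
  have h0 : powSub d (0 : LS) = 0 := by
    rw [powSub_emb d hd]; exact HahnSeries.embDomain_zero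
  rw [h0] at this
  linear_combination -this

lemma powSub_sub (d : ℕ) (hd : 0 < d) (x y : LS) :
    powSub d (x - y) = powSub d x - powSub d y := by
  rw [sub_eq_add_neg, sub_eq_add_neg, powSub_add d hd, powSub_neg d hd]

lemma powSub_ne_zero (d : ℕ) (hd : 0 < d) {x : LS} (hx : x ≠ 0) : powSub d x ≠ 0 := by
  intro h
  have := powSub_coeff d hd x x.order
  rw [h] at this
  simp at this
  exact (HahnSeries.coeff_order_eq_zero.not.2 hx) this.symm

lemma order_powSub (d : ℕ) (hd : 0 < d) {x : LS} (hx : x ≠ 0) :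
    (powSub d x).order = (d : ℤ) * x.order := by
  apply order_eq_of_coeff
  · rw [powSub_coeff d hd]
    exact (HahnSeries.coeff_order_eq_zero.not.2 hx)
  · intro n hn
    by_cases h : ∃ a : ℤ, (d : ℤ) * a = n
    · obtain ⟨a, rfl⟩ := h
      rw [powSub_coeff d hd]
      apply HahnSeries.coeff_eq_zero_of_lt_order
      have hd' : (0 : ℤ) < d := by exact_mod_cast hd
      exact lt_of_mul_lt_mul_left hn hd'.le
    · exact powSub_coeff_notin d hd x h

lemma ldeg_powSub (d : ℕ) (hd : 0 < d) {x : LS} (hx : x ≠ 0) :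
    ldeg (powSub d x) = (d : ℤ) * ldeg x := by
  simp only [ldeg, order_powSub d hd hx]
  ring

lemma powSub_polyE (d : ℕ) (hd : 0 < d) {x : LS} (hx : PolyE x) : PolyE (powSub d x) := by
  obtain ⟨P, rfl⟩ := hx
  induction P using Polynomial.induction_on' with
  | add p q hp hq =>
    rw [map_add, powSub_add d hd]
    exact hp.add hq
  | monomial k c =>
    rw [aeval_Zl_monomial, powSub_single d hd]
    refine ⟨Polynomial.monomial (d * k) c, ?_⟩
    rw [aeval_Zl_monomial]
    congr 1
    push_cast
    ring


lemma legendre {f : LS} (hf : ¬ IsRatFn f) {P Q : LS} (hP : PolyE P) (hQ : PolyE Q)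
    (hQ0 : Q ≠ 0) (hQd : 0 ≤ ldeg Q) (hbound : ldeg (f * Q - P) < - ldeg Q) :
    ∃ (m : ℕ) (α : LS), α ≠ 0 ∧ PolyE α ∧ P = α * cfP (cfa f) m ∧ Q = α * cfQ (cfa f) m ∧
      ldeg (cfQ (cfa f) m) ≤ ldeg Q := by
  classical
  set pred := fun k : ℕ => ldeg (cfQ (cfa f) k) ≤ ldeg Q with hpred
  set b := (ldeg Q).toNat with hb
  have h0 : pred 0 := by rw [hpred]; simpa [cfQ_ldeg_zero] using hQd
  set m := Nat.findGreatest pred b with hm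
  have hm1 : ldeg (cfQ (cfa f) m) ≤ ldeg Q := Nat.findGreatest_spec (Nat.zero_le b) h0
  have hm2 : ldeg Q < ldeg (cfQ (cfa f) (m+1)) := by
    by_cases hle : m + 1 ≤ b
    · have hng := Nat.findGreatest_is_greatest (Nat.lt_succ_self m) hle
      rw [hpred] at hng
      have hng' : ¬ (ldeg (cfQ (cfa f) (m+1)) ≤ ldeg Q) := hng
      omega
    · have h1 := cfQ_ldeg_ge hf (m+1)
      push_cast at h1
      omega
  set pm := cfP (cfa f) m with hpm
  set qm := cfQ (cfa f) m with hqm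
  set pm1 := cfP (cfa f) (m+1) with hpm1
  set qm1 := cfQ (cfa f) (m+1) with hqm1
  have hdet : pm1 * qm - pm * qm1 = (-1 : LS) ^ m := conv_det m
  have hsq : ((-1 : LS)) ^ m * (-1 : LS) ^ m = 1 := by rw [← mul_pow]; norm_num
  set α := -((-1 : LS) ^ m) * (P * qm1 - Q * pm1) with hα
  set β := -((-1 : LS) ^ m) * (Q * pm - P * qm) with hβdef
  have identity1 : α * qm + β * qm1 = Q := by
    rw [hα, hβdef]
    linear_combination ((-1 : LS) ^ m * Q) * hdet + Q * hsq
  have identity2 : α * pm + β * pm1 = P := by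
    rw [hα, hβdef]
    linear_combination ((-1 : LS) ^ m * P) * hdet + P * hsq
  have hmpoly : PolyE (-((-1 : LS) ^ m)) := ((PolyE.one.neg).pow m).neg
  have hpmE : PolyE pm := cfP_polyE f m
  have hqmE : PolyE qm := cfQ_polyE f m
  have hpm1E : PolyE pm1 := cfP_polyE f (m+1)
  have hqm1E : PolyE qm1 := cfQ_polyE f (m+1)
  have hαE : PolyE α := hmpoly.mul ((hP.mul hqm1E).sub (hQ.mul hpm1E))
  have hβE : PolyE β := hmpoly.mul ((hQ.mul hpmE).sub (hP.mul hqmE))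
  have hqm0 : qm ≠ 0 := cfQ_ne hf m
  have hqm10 : qm1 ≠ 0 := cfQ_ne hf (m+1)
  by_cases hβ : β = 0
  · have hα0 : α ≠ 0 := by
      intro h
      rw [h, hβ] at identity1
      simp at identity1
      exact hQ0 identity1.symm
    refine ⟨m, α, hα0, hαE, ?_, ?_, hm1⟩
    · rw [← identity2, hβ]; ring
    · rw [← identity1, hβ]; ring
  · exfalso
    have hβd : 0 ≤ ldeg β := hβE.ldeg_nonneg hβ
    have hβq : β * qm1 ≠ 0 := mul_ne_zero hβ hqm10
    have hβql : ldeg (β * qm1) = ldeg β + ldeg qm1 := ldeg_mul hβ hqm10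
    have hβqQ : ldeg Q < ldeg (β * qm1) := by rw [hβql]; omega
    have hα0 : α ≠ 0 := by
      intro h
      rw [h] at identity1
      have : β * qm1 = Q := by linear_combination identity1
      rw [this] at hβqQ
      omega
    have hαq : α * qm ≠ 0 := mul_ne_zero hα0 hqm0
    have hαql : ldeg (α * qm) = ldeg α + ldeg qm := ldeg_mul hα0 hqm0
    have heq : ldeg (α * qm) = ldeg (β * qm1) := by
      by_contra hne
      have hmax := ldeg_add_max hαq hβq hne
      rw [identity1] at hmax
      have := le_max_right (ldeg (α * qm)) (ldeg (β * qm1))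
      omega
    have herr_m := conv_err hf m
    have herr_m1 := conv_err hf (m+1)
    rw [← hpm, ← hqm, ← hqm1] at herr_m
    rw [← hpm1, ← hqm1] at herr_m1
    have hcomb : f * Q - P = α * (f * qm - pm) + β * (f * qm1 - pm1) := by
      linear_combination (-f) * identity1 + identity2
    have ht1 : α * (f * qm - pm) ≠ 0 := mul_ne_zero hα0 herr_m.1
    have ht2 : β * (f * qm1 - pm1) ≠ 0 := mul_ne_zero hβ herr_m1.1
    have ht1l : ldeg (α * (f * qm - pm)) = ldeg α - ldeg qm1 := by
      rw [ldeg_mul hα0 herr_m.1, herr_m.2]; ring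
    have ht2l : ldeg (β * (f * qm1 - pm1)) = ldeg β - ldeg (cfQ (cfa f) (m+2)) := by
      rw [ldeg_mul hβ herr_m1.1, herr_m1.2]; ring
    have hmono : ldeg qm < ldeg (cfQ (cfa f) (m+2)) := cfQ_mono hf (by omega : m < m + 2)
    have hlt : ldeg (β * (f * qm1 - pm1)) < ldeg (α * (f * qm - pm)) := by
      rw [ht1l, ht2l]
      omega
    have hdom := add_dominant ht1 (Or.inr ⟨ht2, hlt⟩)
    rw [← hcomb] at hdom
    have hfinal : ldeg (f * Q - P) = ldeg β - ldeg qm := by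
      rw [hdom.2, ht1l]
      omega
    linarith [hfinal, hβd, hm1, hbound]

lemma isGap_conv {f : LS} (hf : ¬ IsRatFn f) (m : ℕ) :
    IsGap f (ldeg (cfQ (cfa f) m)) (ldeg (cfQ (cfa f) (m+1))) := by
  refine ⟨⟨m, rfl⟩, ⟨m+1, rfl⟩, cfQ_mono hf (Nat.lt_succ_self m), ?_⟩
  rintro w hw1 hw2 ⟨k, rfl⟩
  rcases le_or_gt k m with h | h
  · have := (cfQ_mono hf).monotone h
    omega
  · have : m + 1 ≤ k := h
    have := (cfQ_mono hf).monotone this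
    omega

lemma gap_succ {f : LS} (hf : ¬ IsRatFn f) {u v : ℤ} (hgap : IsGap f u v) {n : ℕ}
    (hn : ldeg (cfQ (cfa f) n) = u) : v = ldeg (cfQ (cfa f) (n+1)) := by
  obtain ⟨hu, hv, huv, hbet⟩ := hgap
  obtain ⟨k, hk⟩ := hv
  have hnk : n < k := by
    rw [← (cfQ_mono hf).lt_iff_lt]
    omega
  have h2 : ldeg (cfQ (cfa f) (n+1)) ≤ v := by
    rw [← hk]
    exact (cfQ_mono hf).monotone hnk
  rcases eq_or_lt_of_le h2 with h | h
  · exact h.symm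
  · exfalso
    refine hbet (ldeg (cfQ (cfa f) (n+1))) ?_ h ⟨n+1, rfl⟩
    rw [← hn]
    exact cfQ_mono hf (Nat.lt_succ_self n)

end MahlerAux

open MahlerAux

/-- for f non-rational satisfying the Mahler equation, any big gap
[u, v] in Φ(f) (i.e. v - u > (deg A + deg B)/(d-1)) produces, from its convergent
p_u/q_u, the new convergent (A p_u(z^d) + C q_u(z^d))/(B q_u(z^d)) (after
cancellation), whose associated gap [u', v'] has size strictly larger than v - u. -/
theorem big_gap_successor (A B C : Polynomial ℤ) (hA : A ≠ 0) (hB : B ≠ 0)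
    (d : ℕ) (hd : 2 ≤ d) (f : LS) (hf : ¬ IsRatFn f) (hM : MahlerEq A B C d f)
    (u v : ℤ) (hgap : IsGap f u v)
    (hbig : ((A.natDegree + B.natDegree : ℝ)) / ((d : ℝ) - 1) < (v : ℝ) - (u : ℝ)) :
    ∀ p q : LS, IsConvAt f u p q →
      ∃ u' v' : ℤ, ∃ p' q' : LS, IsGap f u' v' ∧ IsConvAt f u' p' q' ∧
        p' / q' = succFrac A B C d p q ∧ v - u < v' - u' := by
  intro p q hconv
  obtain ⟨n, hp, hq, hu⟩ := hconv
  have hd0 : 0 < d := by omega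
  have hv : v = ldeg (cfQ (cfa f) (n+1)) := gap_succ hf hgap (hq ▸ hu)
  have herr := conv_err hf n
  rw [hp, hq] at herr
  set Av := Polynomial.aeval Zl A with hAvdef
  set Bv := Polynomial.aeval Zl B with hBvdef
  set Cv := Polynomial.aeval Zl C with hCvdef
  have hAv : Av ≠ 0 := aeval_Zl_int_ne_zero hA
  have hBv : Bv ≠ 0 := aeval_Zl_int_ne_zero hB
  have hAl : ldeg Av = A.natDegree := ldeg_aeval_Zl_int hA
  have hBl : ldeg Bv = B.natDegree := ldeg_aeval_Zl_int hB
  set Pb := Av * powSub d p + Cv * powSub d q with hPbdef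
  set Qb := Bv * powSub d q with hQbdef
  have hq0 : q ≠ 0 := hq ▸ cfQ_ne hf n
  have hpsq : powSub d q ≠ 0 := powSub_ne_zero d hd0 hq0
  have hQb0 : Qb ≠ 0 := mul_ne_zero hBv hpsq
  have hQbl : ldeg Qb = B.natDegree + (d : ℤ) * u := by
    rw [hQbdef, ldeg_mul hBv hpsq, ldeg_powSub d hd0 hq0, hBl, hu]
  have hQbE : PolyE Qb := (PolyE.int B).mul (powSub_polyE d hd0 (hq ▸ cfQ_polyE f n))
  have hPbE : PolyE Pb := ((PolyE.int A).mul (powSub_polyE d hd0 (hp ▸ cfP_polyE f n))).add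
    ((PolyE.int C).mul (powSub_polyE d hd0 (hq ▸ cfQ_polyE f n)))
  have hMeq : Bv * f = Av * powSub d f + Polynomial.aeval Zl C := hM
  have hkey : f * Qb - Pb = Av * powSub d (f * q - p) := by
    rw [powSub_sub d hd0, powSub_mul d hd0, hPbdef, hQbdef]
    linear_combination (powSub d q) * hMeq
  have hpse : powSub d (f * q - p) ≠ 0 := powSub_ne_zero d hd0 herr.1
  have hne2 : f * Qb - Pb ≠ 0 := by
    rw [hkey]; exact mul_ne_zero hAv hpse
  have hldE : ldeg (f * Qb - Pb) = A.natDegree - (d : ℤ) * v := by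
    rw [hkey, ldeg_mul hAv hpse, ldeg_powSub d hd0 herr.1, herr.2, hAl, hv]
    ring
  have hd1R : (0 : ℝ) < (d : ℝ) - 1 := by
    have : (2 : ℝ) ≤ (d : ℝ) := by exact_mod_cast hd
    linarith
  have hZ : (A.natDegree + B.natDegree : ℤ) < ((d : ℤ) - 1) * (v - u) := by
    rw [div_lt_iff₀ hd1R] at hbig
    have h2 : ((A.natDegree + B.natDegree : ℤ) : ℝ) < (((d : ℤ) - 1) * (v - u) : ℤ) := by
      push_cast
      push_cast at hbig
      linarith
    exact_mod_cast h2
  have huv : u < v := hgap.2.2.1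
  have hexp : ((d : ℤ) - 1) * (v - u) = (d : ℤ) * v - (d : ℤ) * u - (v - u) := by ring
  have hbound : ldeg (f * Qb - Pb) < - ldeg Qb := by
    rw [hldE, hQbl]
    linarith
  have hu0 : 0 ≤ u := by rw [← hu, ← hq]; exact cfQ_ldeg_nonneg hf n
  have hQbd : 0 ≤ ldeg Qb := by
    rw [hQbl]
    have : (0 : ℤ) ≤ (d : ℤ) * u := mul_nonneg (by positivity) hu0
    positivity
  obtain ⟨m, α, hα0, hαE, hPeq, hQeq, _⟩ := legendre hf hPbE hQbE hQb0 hQbd hbound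
  have hqm0 : cfQ (cfa f) m ≠ 0 := cfQ_ne hf m
  refine ⟨ldeg (cfQ (cfa f) m), ldeg (cfQ (cfa f) (m+1)), cfP (cfa f) m, cfQ (cfa f) m,
    isGap_conv hf m, ⟨m, rfl, rfl, rfl⟩, ?_, ?_⟩
  · show cfP (cfa f) m / cfQ (cfa f) m
      = (Polynomial.aeval Zl A * powSub d p + Polynomial.aeval Zl C * powSub d q) /
        (Polynomial.aeval Zl B * powSub d q)
    rw [← hAvdef, ← hBvdef, ← hCvdef, ← hPbdef, ← hQbdef, hPeq, hQeq,
      mul_div_mul_left _ _ hα0]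
  · have h1 : ldeg Qb = ldeg α + ldeg (cfQ (cfa f) m) := by
      rw [hQeq, ldeg_mul hα0 hqm0]
    have herrm := conv_err hf m
    have h2eq : f * Qb - Pb = α * (f * cfQ (cfa f) m - cfP (cfa f) m) := by
      rw [hPeq, hQeq]; ring
    have h2 : ldeg (f * Qb - Pb) = ldeg α - ldeg (cfQ (cfa f) (m+1)) := by
      rw [h2eq, ldeg_mul hα0 herrm.1, herrm.2]
      ring
    have hαd : 0 ≤ ldeg α := hαE.ldeg_nonneg hα0
    rw [hQbl] at h1
    rw [hldE] at h2
    linarith
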